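/- Let f : ℝ^m → ℝ^n be a polynomial map and set S := f(B̄_m). Then there exists a polynomial map F : ℝ^{m(n+1)+n} → ℝ^n such that F(B̄_{m(n+1)+n}) equals the convex hull of S. -/

import Mathlib

open Polynomial.Chebyshev Real

/-- A map between Euclidean spaces is a *polynomial map* if each of its components
is given by the evaluation of a real multivariate polynomial. -/
def IsPolynomialMap {σ τ : Type} (f : EuclideanSpace ℝ σ → EuclideanSpace ℝ τ) : Prop :=
  ∃ p : τ → MvPolynomial σ ℝ, ∀ x i, f x i = MvPolynomial.eval (fun j => x j) (p i)

theorem cheb_parity (j : ℕ) :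
    (∃ r : Polynomial ℝ, ∀ s : ℝ, (T ℝ (2*j)).eval s = r.eval (s^2)) ∧
    (∃ q : Polynomial ℝ, ∀ s : ℝ, (T ℝ (2*j+1)).eval s = s * q.eval (s^2)) := by
  induction j with
  | zero => exact ⟨⟨1, by simp⟩, ⟨1, by simp⟩⟩
  | succ j ih =>
    obtain ⟨⟨r, hr⟩, ⟨q, hq⟩⟩ := ih
    have e1 : (2 * ((j:ℤ)+1)) = 2*(j:ℤ) + 2 := by ring
    have e2 : (2 * ((j:ℤ)+1) + 1) = (2*(j:ℤ)+1) + 2 := by ring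
    have h3 : ∀ s:ℝ, (T ℝ (2*((j:ℤ)+1))).eval s = (2 * Polynomial.X * q - r).eval (s^2) := by
      intro s
      rw [e1, T_add_two]
      simp [hr, hq]; ring
    constructor
    · refine ⟨2 * Polynomial.X * q - r, fun s => ?_⟩
      push_cast
      exact h3 s
    · refine ⟨2 * (2 * Polynomial.X * q - r) - q, fun s => ?_⟩
      push_cast
      rw [e2, T_add_two]
      have : (2*(j:ℤ)+1) + 1 = 2 * ((j:ℤ)+1) := by ring
      rw [this]
      simp [h3, hq]
      ring

theorem cheb_bound (k : ℤ) {s : ℝ} (hs : |s| ≤ 1) : |(T ℝ k).eval s| ≤ 1 := by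
  obtain ⟨θ, _, hθ⟩ := Real.surjOn_cos (a := s) (abs_le.mp hs |> fun h => ⟨h.1, h.2⟩)
  rw [← hθ, T_real_cos]
  exact Real.abs_cos_le_one _

theorem cheb_point (K : ℕ) (hK : Odd K) (hK0 : 0 < K) :
    ∃ s₀ : ℝ, |s₀| ≤ π/(2*K) ∧ |(T ℝ (K:ℤ)).eval s₀| = 1 := by
  have hKR : (0:ℝ) < K := by exact_mod_cast hK0
  set θ₀ : ℝ := π/(2*K) + π/2 with hθ₀
  refine ⟨Real.cos θ₀, ?_, ?_⟩
  · rw [hθ₀, Real.cos_add_pi_div_two]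
    rw [abs_neg, abs_of_nonneg (Real.sin_nonneg_of_nonneg_of_le_pi (by positivity) ?_)]
    · exact Real.sin_le (by positivity)
    · calc π/(2*K) ≤ π/(2*1) := by
            apply div_le_div_of_nonneg_left Real.pi_pos.le (by norm_num)
            have : (1:ℝ) ≤ K := by exact_mod_cast hK0
            linarith
          _ ≤ π := by linarith [Real.pi_pos]
  · rw [T_real_cos]
    obtain ⟨l, hl⟩ := hK
    have hcast : (K:ℝ) = 2*l+1 := by exact_mod_cast congrArg (Nat.cast : ℕ → ℝ) hl
    have h2 : ((K:ℤ):ℝ) * θ₀ = ((l+1 : ℤ):ℝ) * π := by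
      push_cast
      rw [hθ₀, hcast]
      field_simp
      ring
    rw [h2]
    exact Real.abs_cos_int_mul_pi _

noncomputable def nsq {d : ℕ} (x : EuclideanSpace ℝ (Fin d)) : ℝ := ∑ i, (x i)^2

theorem nsq_eq {d : ℕ} (x : EuclideanSpace ℝ (Fin d)) : nsq x = ‖x‖^2 := by
  rw [EuclideanSpace.norm_eq, Real.sq_sqrt (by positivity)]
  simp [nsq, sq_abs]

theorem nsq_nonneg {d : ℕ} (x : EuclideanSpace ℝ (Fin d)) : 0 ≤ nsq x :=
  Finset.sum_nonneg fun _ _ => sq_nonneg _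

theorem norm_le_one_of_nsq {d : ℕ} {x : EuclideanSpace ℝ (Fin d)} (h : nsq x ≤ 1) :
    ‖x‖ ≤ 1 := by nlinarith [nsq_eq x, norm_nonneg x]

theorem nsq_le_one_of_norm {d : ℕ} {x : EuclideanSpace ℝ (Fin d)} (h : ‖x‖ ≤ 1) :
    nsq x ≤ 1 := by nlinarith [nsq_eq x, norm_nonneg x]

noncomputable def Phi (q : Polynomial ℝ) {d : ℕ} (x : EuclideanSpace ℝ (Fin d)) :
    EuclideanSpace ℝ (Fin d) := q.eval (nsq x) • x

theorem Phi_norm_le (q : Polynomial ℝ)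
    (hb : ∀ s:ℝ, |s| ≤ 1 → |s * q.eval (s^2)| ≤ 1) {d : ℕ}
    (x : EuclideanSpace ℝ (Fin d)) (hx : ‖x‖ ≤ 1) : ‖Phi q x‖ ≤ 1 := by
  have h : ‖Phi q x‖ = |q.eval (nsq x)| * ‖x‖ := by
    rw [Phi, norm_smul, Real.norm_eq_abs]
  rw [h, nsq_eq]
  calc |q.eval (‖x‖^2)| * ‖x‖ = |‖x‖ * q.eval (‖x‖^2)| := by
        rw [abs_mul, abs_of_nonneg (norm_nonneg x)]; ring
    _ ≤ 1 := hb ‖x‖ (by rwa [abs_of_nonneg (norm_nonneg x)])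

theorem Phi_surj (q : Polynomial ℝ) {ε : ℝ}
    (hpt : ∃ s₀:ℝ, |s₀| ≤ ε ∧ |s₀ * q.eval (s₀^2)| = 1) {d : ℕ}
    (y : EuclideanSpace ℝ (Fin d)) (hy : ‖y‖ ≤ 1) :
    ∃ x : EuclideanSpace ℝ (Fin d), ‖x‖ ≤ ε ∧ Phi q x = y := by
  obtain ⟨s₀, hs₀ε, hs₀⟩ := hpt
  have hε0 : 0 ≤ ε := le_trans (abs_nonneg _) hs₀ε
  by_cases hy0 : y = 0
  · refine ⟨0, by simp [hε0], ?_⟩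
    simp [Phi, hy0, nsq]
  · set g : ℝ → ℝ := fun s => s * q.eval (s^2) with hg
    have hgc : ContinuousOn g (Set.uIcc 0 s₀) :=
      (continuous_id.mul (q.continuous.comp (continuous_pow 2))).continuousOn
    set σ : ℝ := g s₀ with hσ
    have hσabs : |σ| = 1 := hs₀
    have hσ1 : σ = 1 ∨ σ = -1 := (abs_eq (by norm_num : (0:ℝ) ≤ 1)).mp hσabs
    have hσne : σ ≠ 0 := by rcases hσ1 with h | h <;> rw [h] <;> norm_num
    set r : ℝ := ‖y‖ with hr
    have hr0 : 0 < r := norm_pos_iff.mpr hy0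
    have hmem : σ * r ∈ Set.uIcc (g 0) (g s₀) := by
      have hg0 : g 0 = 0 := by simp [hg]
      rw [hg0, ← hσ, Set.mem_uIcc]
      rcases hσ1 with h | h <;> rw [h]
      · left; constructor <;> nlinarith
      · right; constructor <;> nlinarith
    obtain ⟨s, hs_mem, hs⟩ := intermediate_value_uIcc hgc hmem
    have hs_abs : |s| ≤ |s₀| := by
      rcases Set.mem_uIcc.mp hs_mem with ⟨h1, h2⟩ | ⟨h1, h2⟩
      · rw [abs_of_nonneg h1]; exact le_trans h2 (le_abs_self _)
      · rw [abs_of_nonpos h2]; exact le_trans (neg_le_neg h1) (neg_le_abs _)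
    have hnorm : ‖(s/(σ*r)) • y‖ = |s| := by
      rw [norm_smul, Real.norm_eq_abs, abs_div, abs_mul, hσabs, one_mul,
        abs_of_nonneg hr0.le, ← hr, div_mul_cancel₀ _ hr0.ne']
    refine ⟨(s/(σ*r)) • y, ?_, ?_⟩
    · rw [hnorm]; exact le_trans hs_abs hs₀ε
    · have hσsq : σ^2 = 1 := by rcases hσ1 with h | h <;> rw [h] <;> norm_num
      have hnsq : nsq ((s/(σ*r)) • y) = s^2 := by
        rw [nsq_eq, norm_smul, Real.norm_eq_abs, mul_pow, sq_abs, div_pow, mul_pow,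
          hσsq, one_mul, ← hr]
        field_simp
      rw [Phi, hnsq, smul_smul]
      have hgs : s * q.eval (s^2) = σ * r := hs
      have hcoef : q.eval (s^2) * (s/(σ*r)) = 1 := by
        rw [mul_div_assoc']
        rw [div_eq_one_iff_eq (mul_ne_zero hσne hr0.ne')]
        nlinarith [hgs]
      rw [hcoef, one_smul]

/-! ### Index bookkeeping -/

def idxEquiv (m n : ℕ) : ((Fin (n+1) × Fin m) ⊕ Fin n) ≃ Fin (m*(n+1)+n) :=
  (Equiv.sumCongr (finProdFinEquiv.trans (finCongr (Nat.mul_comm (n+1) m)))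
    (Equiv.refl (Fin n))).trans finSumFinEquiv

def eIdx (m n : ℕ) (i : Fin (n+1)) (k : Fin m) : Fin (m*(n+1)+n) :=
  idxEquiv m n (Sum.inl (i,k))

def tIdx (m n : ℕ) (i : Fin n) : Fin (m*(n+1)+n) := idxEquiv m n (Sum.inr i)

noncomputable def xb (m n : ℕ) (i : Fin (n+1)) (z : EuclideanSpace ℝ (Fin (m*(n+1)+n))) :
    EuclideanSpace ℝ (Fin m) := WithLp.toLp 2 (fun k => z (eIdx m n i k))

noncomputable def tb (m n : ℕ) (z : EuclideanSpace ℝ (Fin (m*(n+1)+n))) :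
    EuclideanSpace ℝ (Fin n) := WithLp.toLp 2 (fun i => z (tIdx m n i))

theorem sum_sq_decomp (m n : ℕ) (z : EuclideanSpace ℝ (Fin (m*(n+1)+n))) :
    nsq z = (∑ i : Fin (n+1), nsq (xb m n i z)) + nsq (tb m n z) := by
  rw [nsq, ← Equiv.sum_comp (idxEquiv m n) (fun j => (z j)^2), Fintype.sum_sum_type,
    Fintype.sum_prod_type]
  rfl

/-! ### The weights -/

noncomputable def lamAux (q : Polynomial ℝ) (m n : ℕ) (i : Fin (n+1))
    (z : EuclideanSpace ℝ (Fin (m*(n+1)+n))) : ℝ :=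
  if h : (i:ℕ) < n then (Phi q (tb m n z) ⟨i,h⟩)^2
  else 1 - ∑ i' : Fin n, (Phi q (tb m n z) i')^2

theorem lam_castSucc (q : Polynomial ℝ) (m n : ℕ) (i : Fin n) (z) :
    lamAux q m n (Fin.castSucc i) z = (Phi q (tb m n z) i)^2 := by
  rw [lamAux, dif_pos (show ((Fin.castSucc i : Fin (n+1)):ℕ) < n from i.isLt)]
  congr 1

theorem lam_last (q : Polynomial ℝ) (m n : ℕ) (z) :
    lamAux q m n (Fin.last n) z = 1 - ∑ i' : Fin n, (Phi q (tb m n z) i')^2 := by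
  rw [lamAux, dif_neg (by simp)]

theorem lam_sum (q : Polynomial ℝ) (m n : ℕ) (z) :
    ∑ i : Fin (n+1), lamAux q m n i z = 1 := by
  rw [Fin.sum_univ_castSucc]
  simp only [lam_castSucc, lam_last]
  ring

theorem lam_nonneg (q : Polynomial ℝ)
    (hb : ∀ s:ℝ, |s| ≤ 1 → |s * q.eval (s^2)| ≤ 1) (m n : ℕ) (i : Fin (n+1))
    {z : EuclideanSpace ℝ (Fin (m*(n+1)+n))} (hz : nsq z ≤ 1) :
    0 ≤ lamAux q m n i z := by
  rw [lamAux]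
  split
  · exact sq_nonneg _
  · have htb : ‖tb m n z‖ ≤ 1 := by
      apply norm_le_one_of_nsq
      have := sum_sq_decomp m n z
      have hx : 0 ≤ ∑ i : Fin (n+1), nsq (xb m n i z) :=
        Finset.sum_nonneg fun i _ => nsq_nonneg _
      linarith
    have h1 : nsq (Phi q (tb m n z)) ≤ 1 :=
      nsq_le_one_of_norm (Phi_norm_le q hb _ htb)
    rw [nsq] at h1
    linarith

/-! ### The map F -/

noncomputable def Fmap (q : Polynomial ℝ) (m n : ℕ)
    (f : EuclideanSpace ℝ (Fin m) → EuclideanSpace ℝ (Fin n))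
    (z : EuclideanSpace ℝ (Fin (m*(n+1)+n))) : EuclideanSpace ℝ (Fin n) :=
  ∑ i : Fin (n+1), lamAux q m n i z • f (Phi q (xb m n i z))

/-! ### Polynomial evaluation plumbing -/

theorem eval_polyeval₂ {σ : Type} (x : σ → ℝ) (s : MvPolynomial σ ℝ) (q : Polynomial ℝ) :
    MvPolynomial.eval x (Polynomial.eval₂ MvPolynomial.C s q)
      = q.eval (MvPolynomial.eval x s) := by
  rw [Polynomial.hom_eval₂]
  have : (MvPolynomial.eval x).comp (MvPolynomial.C) = RingHom.id ℝ :=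
    RingHom.ext fun r => MvPolynomial.eval_C r
  rw [this]
  rfl

theorem eval_mveval₂ {σ τ : Type} (x : τ → ℝ) (g : σ → MvPolynomial τ ℝ)
    (P : MvPolynomial σ ℝ) :
    MvPolynomial.eval x (MvPolynomial.eval₂ MvPolynomial.C g P)
      = MvPolynomial.eval (fun k => MvPolynomial.eval x (g k)) P := by
  rw [MvPolynomial.eval_eval₂]
  have : (MvPolynomial.eval x).comp (MvPolynomial.C) = RingHom.id ℝ :=
    RingHom.ext fun r => MvPolynomial.eval_C r
  rw [this, MvPolynomial.eval₂_id]

theorem Fmap_isPoly (q : Polynomial ℝ) (m n : ℕ)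
    (f : EuclideanSpace ℝ (Fin m) → EuclideanSpace ℝ (Fin n))
    (p : Fin n → MvPolynomial (Fin m) ℝ)
    (hp : ∀ x i, f x i = MvPolynomial.eval (fun j => x j) (p i)) :
    IsPolynomialMap (Fmap q m n f) := by
  classical
  set N := m*(n+1)+n
  -- components
  set nx : Fin (n+1) → MvPolynomial (Fin N) ℝ :=
    fun i => ∑ k : Fin m, (MvPolynomial.X (eIdx m n i k))^2 with hnx
  set nt : MvPolynomial (Fin N) ℝ := ∑ i : Fin n, (MvPolynomial.X (tIdx m n i))^2 with hnt
  set phiP : Fin (n+1) → Fin m → MvPolynomial (Fin N) ℝ :=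
    fun i k => (Polynomial.eval₂ MvPolynomial.C (nx i) q) * MvPolynomial.X (eIdx m n i k)
    with hphiP
  set psiP : Fin n → MvPolynomial (Fin N) ℝ :=
    fun i => (Polynomial.eval₂ MvPolynomial.C nt q) * MvPolynomial.X (tIdx m n i) with hpsiP
  set lamP : Fin (n+1) → MvPolynomial (Fin N) ℝ :=
    fun i => if h : (i:ℕ) < n then (psiP ⟨i,h⟩)^2 else 1 - ∑ i' : Fin n, (psiP i')^2
    with hlamP
  refine ⟨fun j => ∑ i : Fin (n+1),
    lamP i * MvPolynomial.eval₂ MvPolynomial.C (phiP i) (p j), fun z j => ?_⟩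
  have hnxe : ∀ i, MvPolynomial.eval (fun a => z a) (nx i) = nsq (xb m n i z) := by
    intro i
    simp [hnx, nsq, xb]
  have hnte : MvPolynomial.eval (fun a => z a) nt = nsq (tb m n z) := by
    simp [hnt, nsq, tb]
  have hphie : ∀ i k, MvPolynomial.eval (fun a => z a) (phiP i k) = Phi q (xb m n i z) k := by
    intro i k
    simp only [hphiP, map_mul, eval_polyeval₂, hnxe, MvPolynomial.eval_X]
    rw [Phi, PiLp.smul_apply, smul_eq_mul]
    rfl
  have hpsie : ∀ i, MvPolynomial.eval (fun a => z a) (psiP i) = Phi q (tb m n z) i := by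
    intro i
    simp only [hpsiP, map_mul, eval_polyeval₂, hnte, MvPolynomial.eval_X]
    rw [Phi, PiLp.smul_apply, smul_eq_mul]
    rfl
  have hlame : ∀ i, MvPolynomial.eval (fun a => z a) (lamP i) = lamAux q m n i z := by
    intro i
    rw [hlamP, lamAux]
    by_cases h : (i:ℕ) < n
    · simp only [dif_pos h, map_pow, hpsie]
    · simp only [dif_neg h, map_sub, map_one, map_sum, map_pow, hpsie]
  have hAe : ∀ i, MvPolynomial.eval (fun a => z a)
      (MvPolynomial.eval₂ MvPolynomial.C (phiP i) (p j)) = f (Phi q (xb m n i z)) j := by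
    intro i
    have hfun : (fun k => MvPolynomial.eval (fun a => z a) (phiP i k))
        = fun k => Phi q (xb m n i z) k := funext (hphie i)
    rw [eval_mveval₂, hfun]
    exact (hp _ j).symm
  have hFz : Fmap q m n f z j = ∑ i : Fin (n+1), lamAux q m n i z * f (Phi q (xb m n i z)) j := by
    rw [Fmap, WithLp.ofLp_sum, Finset.sum_apply]
    apply Finset.sum_congr rfl
    intro i _
    rw [PiLp.smul_apply, smul_eq_mul]
  rw [hFz, map_sum]
  apply Finset.sum_congr rfl
  intro i _
  rw [map_mul, hlame, hAe]

/-- If `S = f(B̄ₘ)` for a polynomial map `f : ℝᵐ → ℝⁿ`, then the convex hull of `S` is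
the image of the closed unit ball `B̄_{m(n+1)+n}` under a polynomial map
`ℝ^{m(n+1)+n} → ℝⁿ`. -/
theorem convexHull_poly_image_ball (m n : ℕ)
    (f : EuclideanSpace ℝ (Fin m) → EuclideanSpace ℝ (Fin n))
    (hf : IsPolynomialMap f) :
    ∃ F : EuclideanSpace ℝ (Fin (m * (n + 1) + n)) → EuclideanSpace ℝ (Fin n),
      IsPolynomialMap F ∧
      F '' Metric.closedBall 0 1 = convexHull ℝ (f '' Metric.closedBall 0 1) := by
  classical
  obtain ⟨p, hp⟩ := hf
  obtain ⟨q, hq⟩ := (cheb_parity (n+2)).2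
  have hKidx : ((2*n+5 : ℕ) : ℤ) = 2*((n+2 : ℕ):ℤ)+1 := by push_cast; ring
  have hb : ∀ s:ℝ, |s| ≤ 1 → |s * q.eval (s^2)| ≤ 1 := by
    intro s hs
    rw [← hq s]
    exact cheb_bound _ hs
  set ε : ℝ := π/(2*((2*n+5 : ℕ):ℝ)) with hε
  have hpt : ∃ s₀:ℝ, |s₀| ≤ ε ∧ |s₀ * q.eval (s₀^2)| = 1 := by
    obtain ⟨s₀, h1, h2⟩ := cheb_point (2*n+5) ⟨n+2, by omega⟩ (by omega)
    rw [hKidx] at h2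
    exact ⟨s₀, h1, by rw [← hq s₀]; exact h2⟩
  have hε0 : 0 < ε := by
    rw [hε]; positivity
  have hbudget : (n+1:ℝ)*ε^2 + ε^2 ≤ 1 := by
    have hπ : π ≤ 4 := Real.pi_le_four
    have hεle : ε ≤ 2/(2*(n:ℝ)+5) := by
      rw [hε]
      push_cast
      rw [div_le_div_iff₀ (by positivity) (by positivity)]
      nlinarith
    have h1 : ε^2 ≤ (2/(2*(n:ℝ)+5))^2 := pow_le_pow_left₀ hε0.le hεle 2
    have h2 : ((n:ℝ)+2) * (2/(2*(n:ℝ)+5))^2 ≤ 1 := by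
      rw [div_pow, show ((n:ℝ)+2) * (2^2/(2*(n:ℝ)+5)^2) = ((n:ℝ)+2) * 2^2 / (2*(n:ℝ)+5)^2
        from by ring, div_le_one (by positivity)]
      nlinarith [sq_nonneg (n:ℝ)]
    nlinarith [sq_nonneg (2/(2*(n:ℝ)+5))]
  refine ⟨Fmap q m n f, Fmap_isPoly q m n f p hp, ?_⟩
  apply subset_antisymm
  · rintro _ ⟨z, hz, rfl⟩
    rw [Metric.mem_closedBall, dist_zero_right] at hz
    have hznsq : nsq z ≤ 1 := nsq_le_one_of_norm hz
    refine mem_convexHull_of_exists_fintype (fun i : Fin (n+1) => lamAux q m n i z)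
      (fun i => f (Phi q (xb m n i z))) (fun i => lam_nonneg q hb m n i hznsq)
      (lam_sum q m n z) (fun i => ?_) rfl
    refine ⟨Phi q (xb m n i z), ?_, rfl⟩
    rw [Metric.mem_closedBall, dist_zero_right]
    apply Phi_norm_le q hb
    apply norm_le_one_of_nsq
    have hd := sum_sq_decomp m n z
    have hle : nsq (xb m n i z) ≤ ∑ i', nsq (xb m n i' z) :=
      Finset.single_le_sum (f := fun i' => nsq (xb m n i' z))
        (fun i' _ => nsq_nonneg _) (Finset.mem_univ i)
    linarith [nsq_nonneg (tb m n z)]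
  · intro y hy
    obtain ⟨ι, hι, zs, ws, hrange, hai, hwpos, hwsum, hwz⟩ :=
      eq_pos_convex_span_of_mem_convexHull hy
    have hcard : Fintype.card ι ≤ n+1 := by
      have h1 := hai.card_le_finrank_succ
      have h2 : Module.finrank ℝ (vectorSpan ℝ (Set.range zs)) ≤
          Module.finrank ℝ (EuclideanSpace ℝ (Fin n)) := Submodule.finrank_le _
      rw [finrank_euclideanSpace_fin] at h2
      omega
    obtain ⟨u⟩ : Nonempty (ι ↪ Fin (n+1)) :=
      Function.Embedding.nonempty_of_card_le (by simpa using hcard)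
    set μ : Fin (n+1) → ℝ := fun j => ∑ i, if u i = j then ws i else 0 with hμ
    have hμnn : ∀ j, 0 ≤ μ j := fun j =>
      Finset.sum_nonneg fun i _ => by by_cases h : u i = j <;> simp [h, (hwpos i).le]
    have hμsum : ∑ j, μ j = 1 := by
      rw [hμ, Finset.sum_comm]
      simp [Finset.sum_ite_eq, hwsum]
    set yv : Fin (n+1) → EuclideanSpace ℝ (Fin n) :=
      fun j => if h : ∃ i, u i = j then zs h.choose else f 0 with hyv
    have hyS : ∀ j, yv j ∈ f '' Metric.closedBall 0 1 := by
      intro j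
      rw [hyv]
      dsimp only
      split
      · exact hrange (Set.mem_range_self _)
      · exact ⟨0, by simp, rfl⟩
    have hyu : ∀ i, yv (u i) = zs i := by
      intro i
      rw [hyv]
      dsimp only
      rw [dif_pos ⟨i, rfl⟩]
      have hc := (⟨i, rfl⟩ : ∃ i', u i' = u i).choose_spec
      exact congrArg zs (u.injective hc)
    have hrep : ∑ j, μ j • yv j = y := by
      rw [hμ]
      calc ∑ j, (∑ i, if u i = j then ws i else 0) • yv j
          = ∑ j, ∑ i, (if u i = j then ws i else 0) • yv j := by
            apply Finset.sum_congr rfl; intro j _; rw [Finset.sum_smul]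
        _ = ∑ i, ∑ j, (if u i = j then ws i else 0) • yv j := Finset.sum_comm
        _ = ∑ i, ws i • yv (u i) := by
            apply Finset.sum_congr rfl; intro i _
            simp [ite_smul, Finset.sum_ite_eq]
        _ = ∑ i, ws i • zs i := by
            apply Finset.sum_congr rfl; intro i _; rw [hyu]
        _ = y := hwz
    have hball : ∀ j, ∃ b : EuclideanSpace ℝ (Fin m), ‖b‖ ≤ 1 ∧ f b = yv j := by
      intro j
      obtain ⟨b, hb1, hb2⟩ := hyS j
      exact ⟨b, by rwa [Metric.mem_closedBall, dist_zero_right] at hb1, hb2⟩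
    choose bv hbv1 hbv2 using hball
    choose xv hxv1 hxv2 using fun j => Phi_surj q hpt (bv j) (hbv1 j)
    set W : EuclideanSpace ℝ (Fin n) := WithLp.toLp 2 (fun i => Real.sqrt (μ (Fin.castSucc i))) with hW
    have hsqW : ∀ i' : Fin n, (W i')^2 = μ (Fin.castSucc i') := fun i' =>
      Real.sq_sqrt (hμnn _)
    have hWnorm : ‖W‖ ≤ 1 := by
      apply norm_le_one_of_nsq
      rw [nsq]
      rw [Finset.sum_congr rfl fun i _ => hsqW i]
      have hsplit := Fin.sum_univ_castSucc (f := μ)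
      rw [hμsum] at hsplit
      linarith [hμnn (Fin.last n)]
    obtain ⟨tB, htB1, htB2⟩ := Phi_surj q hpt W hWnorm
    set z : EuclideanSpace ℝ (Fin (m*(n+1)+n)) := WithLp.toLp 2 (fun a =>
      Sum.elim (fun pr : Fin (n+1) × Fin m => xv pr.1 pr.2) (fun i => tB i)
        ((idxEquiv m n).symm a)) with hzdef
    have hxb : ∀ i, xb m n i z = xv i := by
      intro i
      ext k
      show z (eIdx m n i k) = xv i k
      rw [hzdef, eIdx]
      simp
    have htb : tb m n z = tB := by
      ext i
      show z (tIdx m n i) = tB i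
      rw [hzdef, tIdx]
      simp
    refine ⟨z, ?_, ?_⟩
    · rw [Metric.mem_closedBall, dist_zero_right]
      apply norm_le_one_of_nsq
      rw [sum_sq_decomp]
      have h1 : ∀ i, nsq (xb m n i z) ≤ ε^2 := by
        intro i
        rw [hxb i, nsq_eq]
        exact pow_le_pow_left₀ (norm_nonneg _) (hxv1 i) 2
      have h2 : nsq (tb m n z) ≤ ε^2 := by
        rw [htb, nsq_eq]
        exact pow_le_pow_left₀ (norm_nonneg _) htB1 2
      have h3 : ∑ i : Fin (n+1), nsq (xb m n i z) ≤ (n+1:ℝ)*ε^2 := by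
        calc ∑ i : Fin (n+1), nsq (xb m n i z) ≤ ∑ _i : Fin (n+1), ε^2 :=
              Finset.sum_le_sum fun i _ => h1 i
          _ = (n+1:ℝ)*ε^2 := by
              rw [Finset.sum_const, Finset.card_univ, Fintype.card_fin, nsmul_eq_mul]
              push_cast
              ring
      linarith
    · have hlam : ∀ i : Fin (n+1), lamAux q m n i z = μ i := by
        intro i
        rw [lamAux]
        split
        · next h =>
          rw [htb, htB2]
          have : (W ⟨(i:ℕ), h⟩)^2 = μ (Fin.castSucc ⟨(i:ℕ), h⟩) := hsqW _
          rw [this]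
          congr 1
        · next h =>
          rw [htb, htB2]
          have hi : i = Fin.last n := by
            apply Fin.ext
            rw [Fin.val_last]
            have := i.isLt
            omega
          have hsplit := Fin.sum_univ_castSucc (f := μ)
          rw [hμsum] at hsplit
          rw [Finset.sum_congr rfl fun i' _ => hsqW i', hi]
          linarith
      have hterm : ∀ i, lamAux q m n i z • f (Phi q (xb m n i z)) = μ i • yv i := by
        intro i
        rw [hlam, hxb, hxv2, hbv2]
      rw [Fmap, Finset.sum_congr rfl fun i _ => hterm i, hrep]
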